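/- Let 𝔽 be a field, θ a probability distribution on [k], and f : V_1×⋯×V_k → 𝔽 a nonzero multilinear map. Then ρ_θ(f) = max_F H_θ(M_F f), where the maximum is over all k-tuples F of complete flags of V_1,…,V_k and M_F f denotes the set of maximal points of supp_F f in the product order. -/

import Mathlib

open scoped BigOperators
open scoped Classical
open scoped ComplexOrder

noncomputable section

namespace CVZ

variable {k : ℕ}

/-- A concrete `k`-tensor over `F` with index types `I i`: the coefficient array
(in the standard bases) of a multilinear map `V₁ × ⋯ × V_k → F` with `dim V_i = |I i|`. -/
abbrev Tensor (F : Type*) (I : Fin k → Type*) : Type _ := (∀ i, I i) → F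

section Basic

variable {F : Type*} [Field F] {I J : Fin k → Type*}
  [∀ i, Fintype (I i)] [∀ i, DecidableEq (I i)]
  [∀ i, Fintype (J i)] [∀ i, DecidableEq (J i)]

/-- Coefficient array of the restriction `f ∘ (A₁, …, A_k)`, where `A_i : W_i → V_i`
is given by the matrix `A i`. -/
def restrictBy (A : ∀ i, Matrix (I i) (J i) F) (t : Tensor F I) : Tensor F J :=
  fun β => ∑ α : ∀ i, I i, (∏ i, A i (α i) (β i)) * t α

/-- `t` restricts to `s`. -/
def Restricts (t : Tensor F I) (s : Tensor F J) : Prop :=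
  ∃ A : ∀ i, Matrix (I i) (J i) F, restrictBy A t = s

/-- A choice of bases of the spaces `V_i`, encoded as a tuple of invertible matrices. -/
def IsBasisTuple (B : ∀ i, Matrix (I i) (I i) F) : Prop := ∀ i, IsUnit (B i)

/-- Support of a tensor (with respect to the standard bases). -/
def supp (t : Tensor F I) : Set (∀ i, I i) := {α | t α ≠ 0}

end Basic

section Entropy

/-- A probability distribution on the finite set `X`. -/
def IsProbDist {X : Type*} [Fintype X] (P : X → ℝ) : Prop :=
  (∀ x, 0 ≤ P x) ∧ ∑ x, P x = 1

/-- Base-2 Shannon entropy. -/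
def H2 {X : Type*} [Fintype X] (P : X → ℝ) : ℝ :=
  ∑ x, -(P x * Real.logb 2 (P x))

variable {I : Fin k → Type*} [∀ i, Fintype (I i)] [∀ i, DecidableEq (I i)]

/-- The `i`-th marginal of a distribution on a product set. -/
def marg (P : (∀ i, I i) → ℝ) (i : Fin k) : I i → ℝ :=
  fun a => ∑ α : ∀ i, I i, if α i = a then P α else 0

/-- `H_θ(P)`, the `θ`-weighted average of the marginal entropies. -/
def Hw (θ : Fin k → ℝ) (P : (∀ i, I i) → ℝ) : ℝ :=
  ∑ i, θ i * H2 (marg P i)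

/-- `H_θ(Φ)`, the supremum of `H_θ(P)` over distributions `P` supported on `Φ`. -/
def HwSet (θ : Fin k → ℝ) (Φ : Set (∀ i, I i)) : ℝ :=
  sSup {h | ∃ P : (∀ i, I i) → ℝ, IsProbDist P ∧ (∀ α, P α ≠ 0 → α ∈ Φ) ∧ h = Hw θ P}

/-- Maximal points of a subset of the product order. -/
def maxPoints [∀ i, LinearOrder (I i)] (Φ : Set (∀ i, I i)) : Set (∀ i, I i) :=
  {α | α ∈ Φ ∧ ∀ β ∈ Φ, ¬ α < β}

end Entropy

section SuppFunc

variable {F : Type*} [Field F] {I : Fin k → Type*} [∀ i, Fintype (I i)] [∀ i, DecidableEq (I i)]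

/-- The logarithmic Strassen upper support functional `ρ^θ`. -/
def rhoUpper (θ : Fin k → ℝ) (t : Tensor F I) : ℝ :=
  sInf {h | ∃ B : ∀ i, Matrix (I i) (I i) F, IsBasisTuple B ∧
    h = HwSet θ (supp (restrictBy B t))}

/-- The Strassen upper support functional `ζ^θ`. -/
def zetaUpper (θ : Fin k → ℝ) (t : Tensor F I) : ℝ :=
  if t = 0 then 0 else (2 : ℝ) ^ rhoUpper θ t

/-- The logarithmic Strassen lower support functional `ρ_θ`. -/
def rhoLower [∀ i, LinearOrder (I i)] (θ : Fin k → ℝ) (t : Tensor F I) : ℝ :=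
  sSup {h | ∃ B : ∀ i, Matrix (I i) (I i) F, IsBasisTuple B ∧
    h = HwSet θ (maxPoints (supp (restrictBy B t)))}

/-- The Strassen lower support functional `ζ_θ`. -/
def zetaLower [∀ i, LinearOrder (I i)] (θ : Fin k → ℝ) (t : Tensor F I) : ℝ :=
  if t = 0 then 0 else (2 : ℝ) ^ rhoLower θ t

/-- The instability of a tensor. -/
def instab (t : Tensor F I) : ℝ :=
  sSup {ε : ℝ | 0 ≤ ε ∧ ∃ B : ∀ i, Matrix (I i) (I i) F, IsBasisTuple B ∧
    ∃ w : ∀ i, I i → ℝ, (∀ i x, 0 ≤ w i x) ∧ (∀ i, ∃ x, w i x ≠ 0) ∧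
      ∀ a ∈ supp (restrictBy B t), ∑ i, w i (a i) ≤
        ∑ i, ((∑ x : I i, w i x) / (Fintype.card (I i) : ℝ) - ε * ⨆ x : I i, w i x)}

end SuppFunc

section Ops

variable {F : Type*} [Field F]

/-- The unit tensor `⟨r⟩`. -/
def unitTensor (F : Type*) [Field F] (k r : ℕ) : Tensor F (fun _ : Fin k => Fin r) :=
  fun α => if ∀ i j : Fin k, α i = α j then 1 else 0

variable {n m : Fin k → ℕ}

/-- Direct sum of two tensors, with the concatenated (naturally ordered) bases. -/
def dirSumFin (s : Tensor F fun i => Fin (n i)) (t : Tensor F fun i => Fin (m i)) :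
    Tensor F fun i => Fin (n i + m i) :=
  fun α =>
    (if h : ∀ i, (α i : ℕ) < n i then s (fun i => ⟨(α i : ℕ), h i⟩) else 0) +
    (if h : ∀ i, n i ≤ (α i : ℕ) then
      t (fun i => ⟨(α i : ℕ) - n i, by have h1 := (α i).isLt; have h2 := h i; omega⟩) else 0)

/-- Tensor (Kronecker) product of two tensors, with the product bases ordered naturally. -/
def tensMulFin (s : Tensor F fun i => Fin (n i)) (t : Tensor F fun i => Fin (m i)) :
    Tensor F fun i => Fin (n i * m i) :=
  fun α =>
    s (fun i => ⟨(α i : ℕ) / m i, by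
      have h := (α i).isLt
      exact Nat.div_lt_of_lt_mul (lt_of_lt_of_le h (Nat.mul_comm (n i) (m i)).le)⟩) *
    t (fun i => ⟨(α i : ℕ) % m i, by
      have h := (α i).isLt
      have hpos : 0 < n i * m i := Nat.lt_of_le_of_lt (Nat.zero_le _) h
      have hm : 0 < m i := by
        rcases Nat.eq_zero_or_pos (m i) with h0 | h0
        · simp [h0] at hpos
        · exact h0
      exact Nat.mod_lt _ hm⟩)

/-- The `N`-th tensor power of a tensor (grouping the legs into `k` groups). -/
def tpow {I : Fin k → Type*} (t : Tensor F I) (N : ℕ) : Tensor F fun i => Fin N → I i :=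
  fun α => ∏ j : Fin N, t fun i => α i j

end Ops

section Subrank

variable {F : Type*} [Field F] {I : Fin k → Type*} [∀ i, Fintype (I i)] [∀ i, DecidableEq (I i)]

/-- The subrank `Q(t)` of a tensor: the largest `r` with `⟨r⟩ ≤ t`. -/
def Qtensor (t : Tensor F I) : ℕ :=
  sSup {r : ℕ | Restricts t (unitTensor F k r)}

/-- A slice: a tensor of the form `v ⊗ w` with `v` in the `j`-th leg. -/
def IsSlice (s : Tensor F I) : Prop :=
  ∃ (j : Fin k) (v : I j → F) (w : (∀ i : {i : Fin k // i ≠ j}, I i.1) → F),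
    ∀ α, s α = v (α j) * w (fun i => α i.1)

/-- The slice rank of a tensor. -/
def sliceRank (t : Tensor F I) : ℕ :=
  sInf {r : ℕ | ∃ c : Fin r → Tensor F I, (∀ a, IsSlice (c a)) ∧ t = ∑ a, c a}

end Subrank

section Combinatorial

variable {I : Fin k → Type*}

/-- A diagonal: any two distinct elements differ in all coordinates. -/
def IsDiagonal (D : Set (∀ i, I i)) : Prop :=
  ∀ a ∈ D, ∀ b ∈ D, a ≠ b → ∀ i, a i ≠ b i

/-- The `i`-th projection of a set of tuples. -/
def projSet (D : Set (∀ i, I i)) (i : Fin k) : Set (I i) := {x | ∃ a ∈ D, a i = x}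

/-- A free diagonal in `Φ`: a diagonal `D` with `D = Φ ∩ (D₁ × ⋯ × D_k)`. -/
def IsFreeDiagonal (D Φ : Set (∀ i, I i)) : Prop :=
  IsDiagonal D ∧ D = Φ ∩ {a | ∀ i, a i ∈ projSet D i}

/-- The (combinatorial) subrank of a set: the maximal size of a free diagonal. -/
def Qset (Φ : Set (∀ i, I i)) : ℕ :=
  sSup {r : ℕ | ∃ D : Set (∀ i, I i), IsFreeDiagonal D Φ ∧ D.ncard = r}

/-- The `N`-fold coordinatewise power of a set of tuples. -/
def setPow (Φ : Set (∀ i, I i)) (N : ℕ) : Set (∀ i, Fin N → I i) :=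
  {α | ∀ j : Fin N, (fun i => α i j) ∈ Φ}

/-- A tight set. -/
def TightSet (Φ : Set (∀ i, I i)) : Prop :=
  ∃ u : ∀ i, I i → ℤ, (∀ i, Function.Injective (u i)) ∧ ∀ α ∈ Φ, ∑ i, u i (α i) = 0

/-- `Φ` is a combinatorial degeneration of `Ψ` (written `Ψ ⊵ Φ`). -/
def CombDegen (Ψ Φ : Set (∀ i, I i)) : Prop :=
  Φ ⊆ Ψ ∧ ∃ u : ∀ i, I i → ℤ,
    (∀ α ∈ Φ, ∑ i, u i (α i) = 0) ∧ ∀ α ∈ Ψ, α ∉ Φ → 0 < ∑ i, u i (α i)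

end Combinatorial

/-- A tight tensor: some basis tuple gives a tight support. -/
def TightTensor {F : Type*} [Field F] {I : Fin k → Type*} [∀ i, Fintype (I i)]
    [∀ i, DecidableEq (I i)] (t : Tensor F I) : Prop :=
  ∃ B : ∀ i, Matrix (I i) (I i) F, IsBasisTuple B ∧ TightSet (supp (restrictBy B t))

/-- A complete (decreasing) flag of subspaces, `W 0 = ⊤` and `dim (W j) = dim V − j`. -/
def IsCompleteFlag (F : Type*) [Field F] {V : Type*} [AddCommGroup V] [Module F V]
    (W : ℕ → Submodule F V) : Prop :=
  Antitone W ∧ W 0 = ⊤ ∧ ∀ j : ℕ, Module.finrank F (W j) = Module.finrank F V - j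

/-- Evaluation of (the multilinear map associated with) `t` at a tuple of vectors. -/
def eval {F : Type*} [Field F] {I : Fin k → Type*} [∀ i, Fintype (I i)] [∀ i, DecidableEq (I i)]
    (t : Tensor F I) (v : ∀ i, I i → F) : F :=
  ∑ α : ∀ i, I i, (∏ i, v i (α i)) * t α

/-- The support of `t` with respect to a tuple of complete flags. -/
def suppFlag {F : Type*} [Field F] {n : Fin k → ℕ} (t : Tensor F fun i => Fin (n i))
    (W : ∀ i, ℕ → Submodule F (Fin (n i) → F)) : Set (∀ i, Fin (n i)) :=
  {α | ∃ v : ∀ i, Fin (n i) → F, (∀ i, v i ∈ W i (α i : ℕ)) ∧ eval t v ≠ 0}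

section Quantum

variable {I : Fin k → Type*} [∀ i, Fintype (I i)] [∀ i, DecidableEq (I i)]

/-- Von Neumann entropy (base 2) of a Hermitian matrix. -/
def vnEntropy {d : Type*} [Fintype d] [DecidableEq d] (ρ : Matrix d d ℂ) : ℝ :=
  if h : ρ.IsHermitian then ∑ x, -(h.eigenvalues x * Real.logb 2 (h.eigenvalues x)) else 0

/-- The `j`-th marginal (reduced density matrix) of the pure state `|t⟩⟨t| / ⟨t|t⟩`. -/
def margMat (t : Tensor ℂ I) (j : Fin k) : Matrix (I j) (I j) ℂ :=
  fun a b =>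
    (∑ α : ∀ i, I i, ∑ β : ∀ i, I i,
      if α j = a ∧ β j = b ∧ (∀ i, i ≠ j → α i = β i) then t α * star (t β) else 0) /
    ∑ α : ∀ i, I i, t α * star (t α)

/-- The logarithmic lower quantum functional `E_θ` for `θ` a distribution on `[k]`. -/
def Ewq (θ : Fin k → ℝ) (t : Tensor ℂ I) : ℝ :=
  sSup {h | ∃ A : ∀ i, Matrix (I i) (I i) ℂ, IsBasisTuple A ∧
    h = ∑ j, θ j * vnEntropy (margMat (restrictBy A t) j)}

/-- The marginal (reduced density matrix) on the legs in `S` of the pure state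
`|t⟩⟨t| / ⟨t|t⟩`. -/
def margMatSet (t : Tensor ℂ I) (S : Finset (Fin k)) :
    Matrix (∀ i : {x : Fin k // x ∈ S}, I i.1) (∀ i : {x : Fin k // x ∈ S}, I i.1) ℂ :=
  fun a b =>
    (∑ α : ∀ i, I i, ∑ β : ∀ i, I i,
      if (∀ (i : Fin k) (hi : i ∈ S), α i = a ⟨i, hi⟩ ∧ β i = b ⟨i, hi⟩) ∧
         (∀ i, i ∉ S → α i = β i)
      then t α * star (t β) else 0) /
    ∑ α : ∀ i, I i, t α * star (t α)

/-- A probability distribution on the bipartitions `{S, S̄}` of `[k]` (encoded by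
choosing a representative `S` for each bipartition occurring in the support). -/
def IsBipDist (θ : Finset (Fin k) → ℝ) : Prop :=
  (∀ S, 0 ≤ θ S) ∧ (∀ S, θ S ≠ 0 → S.Nonempty ∧ Sᶜ.Nonempty) ∧
    ∑ S : Finset (Fin k), θ S = 1

/-- The logarithmic lower quantum functional `E_θ` for `θ` a distribution on bipartitions. -/
def EwqBip (θ : Finset (Fin k) → ℝ) (t : Tensor ℂ I) : ℝ :=
  sSup {h | ∃ A : ∀ i, Matrix (I i) (I i) ℂ, IsBasisTuple A ∧
    h = ∑ S : Finset (Fin k), θ S * vnEntropy (margMatSet (restrictBy A t) S)}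

/-- The lower quantum functional `F_θ`. -/
def FwqBip (θ : Finset (Fin k) → ℝ) (t : Tensor ℂ I) : ℝ :=
  if t = 0 then 0 else (2 : ℝ) ^ EwqBip θ t

/-- Degeneration: `t` lies in the closure of the `GL × ⋯ × GL`-orbit of `s`. -/
def Degen (s t : Tensor ℂ I) : Prop :=
  t ∈ closure {u : Tensor ℂ I | ∃ A : ∀ i, Matrix (I i) (I i) ℂ,
    IsBasisTuple A ∧ restrictBy A s = u}

end Quantum

/-- Trace norm of a complex matrix: `Tr √(AᴴA)`. -/
def traceNorm {d : Type*} [Fintype d] [DecidableEq d] (A : Matrix d d ℂ) : ℝ :=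
  (((((Matrix.posSemidef_conjTranspose_mul_self A).1.eigenvectorUnitary : Matrix d d ℂ) *
    Matrix.diagonal (((↑) : ℝ → ℂ) ∘ Real.sqrt ∘ (Matrix.posSemidef_conjTranspose_mul_self A).1.eigenvalues) *
    (star (Matrix.posSemidef_conjTranspose_mul_self A).1.eigenvectorUnitary : Matrix d d ℂ))).trace).re

/-- `conjIter ρ X j = X_j ⋯ X_2 X_1 ρ X_1 X_2 ⋯ X_j`. -/
def conjIter {d : Type*} [Fintype d] (ρ : Matrix d d ℂ) {n : ℕ}
    (X : Fin n → Matrix d d ℂ) : ℕ → Matrix d d ℂ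
  | 0 => ρ
  | (j + 1) => if h : j < n then X ⟨j, h⟩ * conjIter ρ X j * X ⟨j, h⟩ else conjIter ρ X j

/-- A tricolored sum-free set in `G × G × G`. -/
def IsTriColoredSumFree {G : Type*} [AddCommGroup G] (Γ : Set (G × G × G)) : Prop :=
  (∀ a ∈ Γ, ∀ b ∈ Γ, a ≠ b → a.1 ≠ b.1 ∧ a.2.1 ≠ b.2.1 ∧ a.2.2 ≠ b.2.2) ∧
  ∀ x y z : G, (∃ a ∈ Γ, a.1 = x) → (∃ a ∈ Γ, a.2.1 = y) → (∃ a ∈ Γ, a.2.2 = z) →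
    (x + y + z = 0 ↔ (x, y, z) ∈ Γ)

/-- The maximal size `s₃(G)` of a tricolored sum-free set in `G × G × G`. -/
def s3 (G : Type*) [AddCommGroup G] : ℕ :=
  sSup {r : ℕ | ∃ Γ : Set (G × G × G), IsTriColoredSumFree Γ ∧ Γ.ncard = r}

/-- Binary entropy function (base 2), with the convention `0 · log 0 = 0`. -/
def binH (p : ℝ) : ℝ := -(p * Real.logb 2 p) - (1 - p) * Real.logb 2 (1 - p)

open Filter Topology

section AuxCVZ

variable {k : ℕ} {F : Type*} [Field F]

lemma CVZaux_card_tail (N j : ℕ) : Fintype.card {β : Fin N // j ≤ (β : ℕ)} = N - j := by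
  rw [← Fintype.card_fin (N - j)]
  refine Fintype.card_congr ⟨fun b => ⟨b.1.1 - j, by have := b.1.2; have := b.2; omega⟩,
    fun m => ⟨⟨m.1 + j, by have := m.2; omega⟩, Nat.le_add_left j m.1⟩, ?_, ?_⟩
  · rintro ⟨⟨x, hx⟩, (hj : j ≤ x)⟩
    apply Subtype.ext; apply Fin.ext; simp; omega
  · rintro ⟨m, hm⟩
    apply Fin.ext; simp

lemma CVZaux_mem_tailSpan_iff {N : ℕ} (b : Fin N → (Fin N → F)) (j : ℕ) (v : Fin N → F) :
    v ∈ Submodule.span F (b '' {β : Fin N | j ≤ (β : ℕ)}) ↔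
      ∃ c : Fin N → F, (∀ β, c β ≠ 0 → j ≤ (β : ℕ)) ∧ v = ∑ β, c β • b β := by
  classical
  rw [Set.image_eq_range, Submodule.mem_span_range_iff_exists_fun]
  constructor
  · rintro ⟨c, hc⟩
    refine ⟨fun β => if h : j ≤ (β : ℕ) then c ⟨β, h⟩ else 0,
      fun β hβ => by by_contra h; simp [h] at hβ, ?_⟩
    rw [← hc]
    refine Eq.symm ?_
    calc ∑ β : Fin N, (if h : j ≤ (β : ℕ) then c ⟨β, h⟩ else 0) • b β
        = ∑ β ∈ Finset.univ.filter (fun β : Fin N => j ≤ (β : ℕ)),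
            (if h : j ≤ (β : ℕ) then c ⟨β, h⟩ else 0) • b β := by
          refine (Finset.sum_filter_of_ne ?_).symm
          intro β _ hβ
          by_contra h
          simp [h] at hβ
      _ = ∑ x : ↑{β : Fin N | j ≤ (β : ℕ)},
            (if h : j ≤ ((x : Fin N) : ℕ) then c ⟨x, h⟩ else 0) • b x :=
          Finset.sum_subtype _ (by simp) _
      _ = ∑ x : ↑{β : Fin N | j ≤ (β : ℕ)}, c x • b ↑x := by
          refine Finset.sum_congr rfl fun x _ => ?_
          rw [dif_pos (show j ≤ ((x : Fin N) : ℕ) from x.2)]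
  · rintro ⟨c, hsupp, rfl⟩
    refine ⟨fun x => c x.1, ?_⟩
    calc ∑ x : ↑{β : Fin N | j ≤ (β : ℕ)}, c x.1 • b ↑x
        = ∑ β ∈ Finset.univ.filter (fun β : Fin N => j ≤ (β : ℕ)), c β • b β :=
          (Finset.sum_subtype _ (by simp) (fun β => c β • b β)).symm
      _ = ∑ β : Fin N, c β • b β := by
          refine Finset.sum_filter_of_ne ?_
          intro β _ hβ
          refine hsupp β fun h0 => hβ ?_
          rw [h0, zero_smul]

end AuxCVZ
section AuxCVZ2

variable {k : ℕ} {F : Type*} [Field F] {n : Fin k → ℕ}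

lemma CVZaux_eval_sum (f : Tensor F fun i => Fin (n i))
    (b : ∀ i, Fin (n i) → (Fin (n i) → F)) (c : ∀ i, Fin (n i) → F) :
    eval f (fun i => ∑ β, c i β • b i β) =
      ∑ β : ∀ i, Fin (n i), (∏ i, c i (β i)) *
        restrictBy (fun i => Matrix.of fun x y => b i y x) f β := by
  unfold eval restrictBy
  have h1 : ∀ γ : ∀ i, Fin (n i),
      (∏ i, (∑ β : Fin (n i), c i β • b i β) (γ i))
        = ∑ β : ∀ i, Fin (n i), ∏ i, (c i (β i) * b i (β i) (γ i)) := by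
    intro γ
    simp only [Finset.sum_apply, Pi.smul_apply, smul_eq_mul]
    rw [Finset.prod_univ_sum]
    rw [Fintype.piFinset_univ]
  simp only [h1, Finset.sum_mul]
  rw [Finset.sum_comm]
  refine Finset.sum_congr rfl fun β _ => ?_
  rw [Finset.mul_sum]
  refine Finset.sum_congr rfl fun γ _ => ?_
  simp only [Matrix.of_apply, Finset.prod_mul_distrib]
  ring

lemma CVZaux_suppFlag_eq (f : Tensor F fun i => Fin (n i))
    (b : ∀ i, Fin (n i) → (Fin (n i) → F))
    (W : ∀ i, ℕ → Submodule F (Fin (n i) → F))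
    (hW : ∀ i (j : Fin (n i)), W i (j : ℕ) =
      Submodule.span F (b i '' {β : Fin (n i) | (j : ℕ) ≤ (β : ℕ)})) :
    suppFlag f W =
      {α | ∃ β ∈ supp (restrictBy (fun i => Matrix.of fun x y => b i y x) f), α ≤ β} := by
  ext α
  constructor
  · rintro ⟨v, hv, hne⟩
    have hrep : ∀ i, ∃ c : Fin (n i) → F,
        (∀ β, c β ≠ 0 → ((α i : ℕ) : ℕ) ≤ (β : ℕ)) ∧ v i = ∑ β, c β • b i β := by
      intro i
      have h := hv i
      rw [hW i (α i), CVZaux_mem_tailSpan_iff] at h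
      exact h
    choose c hcsupp hvc using hrep
    have hv' : v = fun i => ∑ β, c i β • b i β := funext hvc
    rw [hv', CVZaux_eval_sum] at hne
    obtain ⟨β, -, hβ⟩ := Finset.exists_ne_zero_of_sum_ne_zero hne
    refine ⟨β, fun h0 => hβ (by rw [h0, mul_zero]), ?_⟩
    intro i
    have hprod : (∏ i, c i (β i)) ≠ 0 := left_ne_zero_of_mul hβ
    have hci : c i (β i) ≠ 0 := Finset.prod_ne_zero_iff.mp hprod i (Finset.mem_univ i)
    exact Fin.le_def.mpr (hcsupp i (β i) hci)
  · rintro ⟨β, hβ, hle⟩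
    refine ⟨fun i => b i (β i), fun i => ?_, ?_⟩
    · rw [hW i (α i)]
      exact Submodule.subset_span ⟨β i, Fin.le_def.mp (hle i), rfl⟩
    · have he : eval f (fun i => b i (β i)) =
        restrictBy (fun i => Matrix.of fun x y => b i y x) f β := rfl
      rw [he]
      exact hβ

lemma CVZaux_maxPoints_down {I : Fin k → Type*} [∀ i, LinearOrder (I i)] (S : Set (∀ i, I i)) :
    maxPoints {α | ∃ β ∈ S, α ≤ β} = maxPoints S := by
  ext α
  simp only [maxPoints, Set.mem_setOf_eq]
  constructor
  · rintro ⟨⟨β, hβS, hαβ⟩, hmax⟩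
    have hαβ' : α = β := by
      by_contra hne
      exact hmax β ⟨β, hβS, le_rfl⟩ (lt_of_le_of_ne hαβ hne)
    subst hαβ'
    exact ⟨hβS, fun γ hγ hlt => hmax γ ⟨γ, hγ, le_rfl⟩ hlt⟩
  · rintro ⟨hαS, hmax⟩
    refine ⟨⟨α, hαS, le_rfl⟩, ?_⟩
    rintro β ⟨γ, hγS, hβγ⟩ hlt
    exact hmax γ hγS (lt_of_lt_of_le hlt hβγ)

end AuxCVZ2
section AuxCVZ3
open Matrix

variable {F : Type*} [Field F]

lemma CVZaux_flag_of_basis {N : ℕ} (B : Matrix (Fin N) (Fin N) F) (hB : IsUnit B) :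
    IsCompleteFlag F (fun j => Submodule.span F
      ((fun β x => B x β) '' {β : Fin N | j ≤ (β : ℕ)})) := by
  have hli : LinearIndependent F (fun β => Bᵀ β) :=
    Matrix.linearIndependent_cols_iff_isUnit.mpr hB
  refine ⟨?_, ?_, ?_⟩
  · intro j j' h
    exact Submodule.span_mono (Set.image_mono fun β hb => le_trans h hb)
  · have hs : Function.Surjective B.mulVec := Matrix.mulVec_surjective_iff_isUnit.mpr hB
    have hr : LinearMap.range B.mulVecLin = ⊤ := LinearMap.range_eq_top.mpr hs
    rw [Matrix.range_mulVecLin] at hr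
    have hset : ((fun β x => B x β) '' {β : Fin N | 0 ≤ (β : ℕ)}) = Set.range Bᵀ := by
      rw [show {β : Fin N | (0 : ℕ) ≤ (β : ℕ)} = Set.univ from
        Set.eq_univ_of_forall fun β => Nat.zero_le _, Set.image_univ]
      rfl
    show Submodule.span F ((fun β x => B x β) '' {β : Fin N | (0:ℕ) ≤ (β : ℕ)}) = ⊤
    rw [hset]
    exact hr
  · intro j
    have himg : (fun β x => B x β) '' {β : Fin N | j ≤ (β : ℕ)} =
        Set.range ((fun β => Bᵀ β) ∘ (Subtype.val : {β : Fin N // j ≤ (β : ℕ)} → Fin N)) := by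
      rw [Set.range_comp, Subtype.range_coe_subtype]
      rfl
    show Module.finrank F (Submodule.span F ((fun β x => B x β) '' {β : Fin N | j ≤ (β : ℕ)}))
      = Module.finrank F (Fin N → F) - j
    rw [himg, finrank_span_eq_card (hli.comp Subtype.val Subtype.val_injective),
      CVZaux_card_tail]
    congr 1
    simp

lemma CVZaux_basis_of_flag {N : ℕ} (W : ℕ → Submodule F (Fin N → F))
    (hW : IsCompleteFlag F W) :
    ∃ b : Fin N → (Fin N → F),
      IsUnit (Matrix.of fun x (y : Fin N) => b y x) ∧
      ∀ j : ℕ, j ≤ N → W j = Submodule.span F (b '' {β : Fin N | j ≤ (β : ℕ)}) := by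
  obtain ⟨hmono, htop, hrank⟩ := hW
  have hdim : Module.finrank F (Fin N → F) = N := by simp
  have hex : ∀ β : Fin N, ∃ x, x ∈ W (β : ℕ) ∧ x ∉ W ((β : ℕ) + 1) := by
    intro β
    have hlt : W ((β : ℕ) + 1) < W (β : ℕ) := by
      refine lt_of_le_of_ne (hmono (Nat.le_succ _)) ?_
      intro heq
      have h1 := hrank (β : ℕ)
      have h2 := hrank ((β : ℕ) + 1)
      rw [heq] at h2
      rw [hdim] at h1 h2
      have := β.isLt
      omega
    exact SetLike.exists_of_lt hlt
  choose b hb1 hb2 using hex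
  have key : ∀ m j, j ≤ N → N - j ≤ m →
      W j = Submodule.span F (b '' {β : Fin N | j ≤ (β : ℕ)}) := by
    have hbase : W N = Submodule.span F (b '' {β : Fin N | N ≤ (β : ℕ)}) := by
      have hempty : (b '' {β : Fin N | N ≤ (β : ℕ)}) = ∅ := by
        rw [Set.image_eq_empty]
        exact Set.eq_empty_iff_forall_notMem.mpr fun β hβ => absurd β.isLt (by
          simp only [Set.mem_setOf_eq] at hβ; omega)
      rw [hempty, Submodule.span_empty]
      have h0 : Module.finrank F (W N) = 0 := by rw [hrank N, hdim]; omega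
      exact Submodule.finrank_eq_zero.mp h0
    intro m
    induction m with
    | zero =>
      intro j hjN hm
      have : j = N := by omega
      subst this
      exact hbase
    | succ m ih =>
      intro j hjN hm
      rcases eq_or_lt_of_le hjN with heq | hlt
      · subst heq; exact hbase
      · have ihj := ih (j + 1) (by omega) (by omega)
        have hTle : Submodule.span F (b '' {β : Fin N | j ≤ (β : ℕ)}) ≤ W j := by
          apply Submodule.span_le.mpr
          rintro x ⟨β, hβ, rfl⟩
          exact hmono hβ (hb1 β)
        have hWT : W (j + 1) ≤ Submodule.span F (b '' {β : Fin N | j ≤ (β : ℕ)}) := by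
          rw [ihj]
          exact Submodule.span_mono (Set.image_mono fun β hβ => Nat.le_of_succ_le hβ)
        have hbj : b ⟨j, hlt⟩ ∈ Submodule.span F (b '' {β : Fin N | j ≤ (β : ℕ)}) :=
          Submodule.subset_span ⟨⟨j, hlt⟩, le_refl j, rfl⟩
        have hbj2 : b ⟨j, hlt⟩ ∉ W (j + 1) := hb2 ⟨j, hlt⟩
        have hltT : W (j + 1) < Submodule.span F (b '' {β : Fin N | j ≤ (β : ℕ)}) :=
          lt_of_le_of_ne hWT (fun h => hbj2 (by rw [← h] at hbj; exact hbj))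
        have h1 := Submodule.finrank_lt_finrank_of_lt hltT
        have h3 : Module.finrank F (W j) ≤
            Module.finrank F (Submodule.span F (b '' {β : Fin N | j ≤ (β : ℕ)})) := by
          have e1 := hrank j
          have e2 := hrank (j + 1)
          rw [hdim] at e1 e2
          omega
        exact (Submodule.eq_of_le_of_finrank_le hTle h3).symm
  refine ⟨b, ?_, fun j hj => key (N - j) j hj le_rfl⟩
  rw [← Matrix.mulVec_surjective_iff_isUnit]
  have hr : LinearMap.range (Matrix.of fun x (y : Fin N) => b y x).mulVecLin = ⊤ := by
    rw [Matrix.range_mulVecLin]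
    have h0 := key N 0 (Nat.zero_le N) le_rfl
    rw [htop] at h0
    have hset : Set.range (Matrix.of fun x (y : Fin N) => b y x)ᵀ =
        b '' {β : Fin N | 0 ≤ (β : ℕ)} := by
      rw [show {β : Fin N | (0 : ℕ) ≤ (β : ℕ)} = Set.univ from
        Set.eq_univ_of_forall fun β => Nat.zero_le _, Set.image_univ]
      rfl
    rw [show Set.range (Matrix.of fun x (y : Fin N) => b y x).col = _ from hset, ← h0]
  have hsurj := LinearMap.range_eq_top.mp hr
  intro y
  obtain ⟨x, hx⟩ := hsurj y
  exact ⟨x, by simpa using hx⟩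

end AuxCVZ3
/-- the lower support functional via complete flags. -/
theorem statement3 {k : ℕ} {F : Type*} [Field F] {n : Fin k → ℕ}
    (θ : Fin k → ℝ) (hθ : IsProbDist θ)
    (f : Tensor F fun i => Fin (n i)) (hf : f ≠ 0) :
    rhoLower θ f =
      sSup {h | ∃ W : ∀ i, ℕ → Submodule F (Fin (n i) → F),
        (∀ i, IsCompleteFlag F (W i)) ∧ h = HwSet θ (maxPoints (suppFlag f W))} := by
  unfold rhoLower
  congr 1
  ext h
  constructor
  · rintro ⟨B, hB, rfl⟩
    refine ⟨fun i j => Submodule.span F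
        ((fun β x => B i x β) '' {β : Fin (n i) | j ≤ (β : ℕ)}),
      fun i => CVZaux_flag_of_basis (B i) (hB i), ?_⟩
    have hBB : (fun i => Matrix.of fun x y => (fun (β : Fin (n i)) x => B i x β) y x) = B := rfl
    have hsupp := CVZaux_suppFlag_eq f (fun i β x => B i x β)
      (fun i j => Submodule.span F ((fun β x => B i x β) '' {β : Fin (n i) | j ≤ (β : ℕ)}))
      (fun i j => rfl)
    rw [hBB] at hsupp
    rw [hsupp, CVZaux_maxPoints_down]
  · rintro ⟨W, hWf, rfl⟩
    choose b hbu hbs using fun i => CVZaux_basis_of_flag (W i) (hWf i)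
    refine ⟨fun i => Matrix.of fun x y => b i y x, hbu, ?_⟩
    have hsupp := CVZaux_suppFlag_eq f b W (fun i j => hbs i (j : ℕ) (le_of_lt j.isLt))
    rw [hsupp, CVZaux_maxPoints_down]

end CVZ

end
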